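/- Let m ≥ 1, d ≥ 1 and k > 2m be integers, and let (v_1, …, v_k) ∈ (ℤ^d)^k be a k-term degree-m vector polynomial progression. Then the tuple of squared Euclidean norms (‖v_1‖², …, ‖v_k‖²), where ‖v‖² = Σ_{j=1}^d v_j², is a k-term degree-2m polynomial progression, and ‖v_1‖² = ⋯ = ‖v_k‖² if and only if v_1 = ⋯ = v_k. -/

import Mathlib

/-- `(x 0, …, x (k-1))` is a `k`-term degree-`m` polynomial progression:
there is a real polynomial `p` of degree at most `m` with `x i = p (i+1)`. -/
def IsPP (m : ℕ) {k : ℕ} (x : Fin k → ℝ) : Prop :=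
  ∃ p : Polynomial ℝ, p.natDegree ≤ m ∧ ∀ i : Fin k, x i = p.eval (((i : ℕ) : ℝ) + 1)

/-- `(v 0, …, v (k-1))` in `ℤ^d` is a `k`-term degree-`m` vector polynomial progression:
each coordinate sequence is a `k`-term degree-`m` polynomial progression. -/
def IsVecPP (m : ℕ) {k d : ℕ} (v : Fin k → Fin d → ℤ) : Prop :=
  ∀ j : Fin d, IsPP m (fun i => ((v i j : ℤ) : ℝ))

lemma coeff_sq_two_mul (q : Polynomial ℝ) (n : ℕ) (h : q.natDegree ≤ n) :
    (q * q).coeff (2 * n) = q.coeff n * q.coeff n := by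
  rw [Polynomial.coeff_mul]
  rw [Finset.sum_eq_single (n, n)]
  · intro b hb hne
    simp only [Finset.HasAntidiagonal.mem_antidiagonal] at hb
    rcases lt_or_ge n b.1 with h1 | h1
    · rw [Polynomial.coeff_eq_zero_of_natDegree_lt (lt_of_le_of_lt h h1), zero_mul]
    · have hb1 : b.1 < n := by
        rcases lt_or_eq_of_le h1 with h2 | h2
        · exact h2
        · exfalso; apply hne; have : b.2 = n := by omega
          exact Prod.ext_iff.mpr ⟨h2, this⟩
      have : n < b.2 := by omega
      rw [Polynomial.coeff_eq_zero_of_natDegree_lt (lt_of_le_of_lt h this), mul_zero]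
  · intro hmem
    exfalso; apply hmem; simp [Finset.HasAntidiagonal.mem_antidiagonal]; omega

/-- the squared norms of a `k`-term degree-`m` vector polynomial progression
(with `k > 2m`) form a `k`-term degree-`2m` polynomial progression, which is trivial
iff the vector progression is trivial. -/
theorem stmt2 (m d k : ℕ) (hm : 1 ≤ m) (hd : 1 ≤ d) (hk : 2 * m < k)
    (v : Fin k → Fin d → ℤ) (hv : IsVecPP m v) :
    IsPP (2 * m) (fun i => ((∑ j, (v i j) ^ 2 : ℤ) : ℝ)) ∧
    ((∀ i i' : Fin k, ∑ j, (v i j) ^ 2 = ∑ j, (v i' j) ^ 2) ↔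
      (∀ i i' : Fin k, v i = v i')) := by
  choose p hp1 hp2 using hv
  set P : Polynomial ℝ := ∑ j, (p j) * (p j) with hP
  have hPdeg : P.natDegree ≤ 2 * m := by
    apply Polynomial.natDegree_sum_le_of_forall_le
    intro j _
    calc ((p j) * (p j)).natDegree ≤ (p j).natDegree + (p j).natDegree :=
          Polynomial.natDegree_mul_le
      _ ≤ 2 * m := by have := hp1 j; omega
  have hPeval : ∀ i : Fin k, ((∑ j, (v i j) ^ 2 : ℤ) : ℝ) = P.eval (((i : ℕ) : ℝ) + 1) := by
    intro i
    rw [hP, Polynomial.eval_finset_sum]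
    push_cast
    apply Finset.sum_congr rfl
    intro j _
    rw [Polynomial.eval_mul]
    have := hp2 j i; simp only at this; rw [← this]
    ring
  constructor
  · exact ⟨P, hPdeg, hPeval⟩
  constructor
  · intro h
    -- the polynomial P is constant
    have hk0 : 0 < k := by omega
    have i0 : Fin k := ⟨0, hk0⟩
    have hQ : P - Polynomial.C (P.eval (((i0 : ℕ) : ℝ) + 1)) = 0 := by
      apply Polynomial.eq_zero_of_natDegree_lt_card_of_eval_eq_zero _
        (f := fun i : Fin k => ((i : ℕ) : ℝ) + 1)
      · intro a b hab
        simp only at hab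
        have : ((a : ℕ) : ℝ) = ((b : ℕ) : ℝ) := by linarith
        exact Fin.ext (by exact_mod_cast this)
      · intro i
        simp only [Polynomial.eval_sub, Polynomial.eval_C]
        rw [← hPeval i, ← hPeval i0]
        rw [h i i0]
        ring
      · calc (P - Polynomial.C (P.eval (((i0 : ℕ) : ℝ) + 1))).natDegree
            ≤ max P.natDegree (Polynomial.C (P.eval (((i0 : ℕ) : ℝ) + 1))).natDegree :=
              Polynomial.natDegree_sub_le _ _
          _ < Fintype.card (Fin k) := by
              simp only [Polynomial.natDegree_C, Fintype.card_fin]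
              omega
    have hPC : P = Polynomial.C (P.eval (((i0 : ℕ) : ℝ) + 1)) := by
      have := sub_eq_zero.mp hQ; exact this
    -- each p j is constant
    set n : ℕ := Finset.univ.sup (fun j : Fin d => (p j).natDegree) with hn
    have hnle : ∀ j, (p j).natDegree ≤ n := fun j =>
      Finset.le_sup (f := fun j : Fin d => (p j).natDegree) (Finset.mem_univ j)
    have hn0 : n = 0 := by
      by_contra hne
      have hn1 : 1 ≤ n := Nat.one_le_iff_ne_zero.mpr hne
      have hcoeff : P.coeff (2 * n) = 0 := by
        rw [hPC, Polynomial.coeff_C, if_neg (by omega)]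
      have hsum : ∑ j, ((p j).coeff n) * ((p j).coeff n) = 0 := by
        rw [← hcoeff, hP, Polynomial.finset_sum_coeff]
        exact Finset.sum_congr rfl fun j _ => (coeff_sq_two_mul (p j) n (hnle j)).symm
      obtain ⟨j0, -, hj0⟩ := Finset.exists_mem_eq_sup Finset.univ
        (Finset.univ_nonempty_iff.mpr ⟨⟨0, hd⟩⟩) (fun j : Fin d => (p j).natDegree)
      have hj0' : (p j0).natDegree = n := hj0.symm
      have hpj0 : (p j0).coeff n ≠ 0 := by
        rw [← hj0']
        intro hc
        have : p j0 = 0 := Polynomial.leadingCoeff_eq_zero.mp hc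
        rw [this] at hj0'
        simp at hj0'
        omega
      have hzero : ∀ j ∈ Finset.univ, ((p j).coeff n) * ((p j).coeff n) = 0 := by
        rw [← Finset.sum_eq_zero_iff_of_nonneg (fun j _ => mul_self_nonneg _)]
        exact hsum
      exact hpj0 (by nlinarith [hzero j0 (Finset.mem_univ j0)])
    intro i i'
    funext j
    have hdeg0 : (p j).natDegree = 0 := le_antisymm (hn0 ▸ hnle j) (Nat.zero_le _)
    obtain ⟨a, ha⟩ := Polynomial.natDegree_eq_zero.mp hdeg0
    have h1 : ((v i j : ℤ) : ℝ) = a := by have := hp2 j i; simp only at this; rw [this, ← ha, Polynomial.eval_C]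
    have h2 : ((v i' j : ℤ) : ℝ) = a := by have := hp2 j i'; simp only at this; rw [this, ← ha, Polynomial.eval_C]
    exact_mod_cast h1.trans h2.symm
  · intro h i i'
    rw [h i i']
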